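/- Let R be a commutative ring, I ⊆ R an ideal, and p ≥ 1 an integer. Let T ⊆ M_p(R) be the set of p×p matrices (a_{ij}) with a_{ij} ∈ R for i ≥ j and a_{ij} ∈ I for i < j, and let J ⊆ M_p(R) be the set of p×p matrices (a_{ij}) with a_{ij} ∈ R for i > j and a_{ij} ∈ I for i ≤ j. Then T is a subring of M_p(R), J is a two-sided ideal of T, and the p-th power ideal J^p (the additive subgroup generated by products of p elements of J) equals I·T, i.e. the set of matrices (a_{ij}) with a_{ij} ∈ I for i ≥ j and a_{ij} ∈ I² for i < j. -/

import Mathlib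

open Matrix

/-- Product of a chain of (scaled) standard basis matrices. -/
lemma GL_chain_prod {R : Type*} [CommRing R] {p : ℕ} (k : ℕ → Fin p) (s : ℕ → R) :
    ∀ n, 1 ≤ n →
      ((List.range n).map (fun t => s t • Matrix.single (k t) (k (t+1)) (1:R))).prod
        = (∏ t ∈ Finset.range n, s t) • Matrix.single (k 0) (k n) 1 := by
  intro n
  induction n with
  | zero => omega
  | succ n ih =>
    intro _
    rcases Nat.eq_zero_or_pos n with rfl | hn
    · show (List.map _ [0]).prod = _
      rw [List.map_cons, List.map_nil, List.prod_cons, List.prod_nil, mul_one,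
        Finset.prod_range_one]
    · rw [List.range_succ, List.map_append, List.prod_append, ih hn]
      simp only [List.map_cons, List.map_nil, List.prod_cons, List.prod_nil, mul_one]
      rw [smul_mul_assoc, mul_smul_comm, Matrix.single_mul_single_same, one_mul,
        smul_smul, Finset.prod_range_succ]

/-- Entries of a product of matrices from `J` lie in powers of `I`. -/
lemma GL_prod_entry_mem {R : Type*} [CommRing R] {p : ℕ} (I : Ideal R) :
    ∀ (l : List (Matrix (Fin p) (Fin p) R)),
      (∀ x ∈ l, ∀ i j : Fin p, i ≤ j → x i j ∈ I) →
      ∀ i j : Fin p, l.prod i j ∈ I ^ ((l.length + (p-1) + j.val - i.val) / p) := by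
  intro l
  induction l with
  | nil =>
    intro _ i j
    simp only [List.prod_nil, List.length_nil, Nat.zero_add]
    by_cases h : i = j
    · subst h
      have he : ((p - 1) + i.val - i.val) / p = 0 := by
        have := i.isLt
        apply Nat.div_eq_of_lt; omega
      rw [Matrix.one_apply_eq, he, pow_zero, Ideal.one_eq_top]
      trivial
    · rw [Matrix.one_apply_ne h]
      exact Ideal.zero_mem _
  | cons a l ih =>
    intro hmem i j
    have hl : ∀ x ∈ l, ∀ i j : Fin p, i ≤ j → x i j ∈ I :=
      fun x hx => hmem x (List.mem_cons_of_mem _ hx)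
    rw [List.prod_cons, Matrix.mul_apply]
    apply Ideal.sum_mem
    intro k _
    have hk := k.isLt
    have hi := i.isLt
    have hpk : 0 < p := Nat.pos_of_ne_zero (by omega)
    by_cases hik : i ≤ k
    · have ha := hmem a (List.mem_cons_self) i k hik
      have hb := ih hl k j
      have hmul : a i k * l.prod k j ∈ I ^ ((l.length + (p-1) + j.val - k.val) / p + 1) := by
        rw [pow_succ, mul_comm (a i k)]
        exact Ideal.mul_mem_mul hb ha
      refine Ideal.pow_le_pow_right ?_ hmul
      have hstep : ((l.length + (p-1) + j.val - k.val) / p + 1)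
          = (l.length + (p-1) + j.val - k.val + p) / p := by
        rw [Nat.add_div_right _ hpk]
      rw [hstep]
      simp only [List.length_cons]
      apply Nat.div_le_div_right
      omega
    · push_neg at hik
      have hb := ih hl k j
      have hmul : a i k * l.prod k j ∈ I ^ ((l.length + (p-1) + j.val - k.val) / p) :=
        Ideal.mul_mem_left _ _ hb
      refine Ideal.pow_le_pow_right ?_ hmul
      simp only [List.length_cons]
      apply Nat.div_le_div_right
      have : k.val < i.val := hik
      omega


/-- Affine-local form of the identity `J^p = T ⊗ O(-D)` for the triangular
Geigle-Lenzing order: `T` (matrices with entries in `R` on/below the diagonal and in `I`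
above) is a subring of `M_p(R)`, `J` (matrices with entries in `I` on/above the diagonal
and in `R` below) is a two-sided ideal of `T`, and the additive subgroup generated by
products of `p` elements of `J` is the set of matrices with entries in `I` on/below the
diagonal and in `I²` above. -/
theorem GL_order_ideal_power (R : Type*) [CommRing R] (I : Ideal R) (p : ℕ) (hp : 1 ≤ p)
    (T J : Set (Matrix (Fin p) (Fin p) R))
    (hT : T = {m : Matrix (Fin p) (Fin p) R | ∀ i j : Fin p, i < j → m i j ∈ I})
    (hJ : J = {m : Matrix (Fin p) (Fin p) R | ∀ i j : Fin p, i ≤ j → m i j ∈ I}) :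
    (∃ S : Subring (Matrix (Fin p) (Fin p) R), (S : Set (Matrix (Fin p) (Fin p) R)) = T) ∧
    (J ⊆ T ∧ (0 : Matrix (Fin p) (Fin p) R) ∈ J ∧
      (∀ a b, a ∈ J → b ∈ J → a + b ∈ J) ∧ (∀ a, a ∈ J → -a ∈ J) ∧
      (∀ t a, t ∈ T → a ∈ J → t * a ∈ J ∧ a * t ∈ J)) ∧
    (AddSubgroup.closure {m : Matrix (Fin p) (Fin p) R |
        ∃ l : List (Matrix (Fin p) (Fin p) R), l.length = p ∧ (∀ x ∈ l, x ∈ J) ∧ m = l.prod} :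
      Set (Matrix (Fin p) (Fin p) R)) =
      {m : Matrix (Fin p) (Fin p) R |
        (∀ i j : Fin p, j ≤ i → m i j ∈ I) ∧ (∀ i j : Fin p, i < j → m i j ∈ I ^ 2)} := by
  subst hT hJ
  refine ⟨?_, ?_, ?_⟩
  · -- T is a subring
    refine ⟨{ carrier := {m : Matrix (Fin p) (Fin p) R | ∀ i j : Fin p, i < j → m i j ∈ I}
              zero_mem' := fun i j _ => by simp only [Matrix.zero_apply]; exact I.zero_mem
              one_mem' := fun i j hij => by
                rw [Matrix.one_apply_ne (Fin.ne_of_lt hij)]; exact I.zero_mem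
              add_mem' := fun {a b} ha hb i j hij => by
                rw [Matrix.add_apply]; exact I.add_mem (ha i j hij) (hb i j hij)
              neg_mem' := fun {a} ha i j hij => by
                rw [Matrix.neg_apply]; exact I.neg_mem (ha i j hij)
              mul_mem' := fun {a b} ha hb i j hij => by
                rw [Matrix.mul_apply]
                apply Ideal.sum_mem
                intro k _
                by_cases hk : i < k
                · exact Ideal.mul_mem_right _ _ (ha i k hk)
                · exact Ideal.mul_mem_left _ _
                    (hb k j (lt_of_le_of_lt (not_lt.1 hk) hij)) }, rfl⟩
  · -- J is a two-sided ideal of T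
    refine ⟨fun m hm i j hij => hm i j hij.le,
      fun i j _ => by simp only [Matrix.zero_apply]; exact I.zero_mem,
      fun a b ha hb i j hij => by
        rw [Matrix.add_apply]; exact I.add_mem (ha i j hij) (hb i j hij),
      fun a ha i j hij => by
        rw [Matrix.neg_apply]; exact I.neg_mem (ha i j hij),
      fun t a ht ha => ⟨?_, ?_⟩⟩
    · intro i j hij
      rw [Matrix.mul_apply]
      apply Ideal.sum_mem
      intro k _
      by_cases hk : k ≤ j
      · exact Ideal.mul_mem_left _ _ (ha k j hk)
      · exact Ideal.mul_mem_right _ _ (ht i k (lt_of_le_of_lt hij (not_le.1 hk)))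
    · intro i j hij
      rw [Matrix.mul_apply]
      apply Ideal.sum_mem
      intro k _
      by_cases hk : i ≤ k
      · exact Ideal.mul_mem_right _ _ (ha i k hk)
      · exact Ideal.mul_mem_left _ _ (ht k j (lt_of_lt_of_le (not_le.1 hk) hij))
  · -- the hard part
    set Gen : Set (Matrix (Fin p) (Fin p) R) :=
      {m : Matrix (Fin p) (Fin p) R |
        ∃ l : List (Matrix (Fin p) (Fin p) R), l.length = p ∧
          (∀ x ∈ l, x ∈ {m : Matrix (Fin p) (Fin p) R | ∀ i j : Fin p, i ≤ j → m i j ∈ I}) ∧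
          m = l.prod} with hGen
    -- the target additive subgroup
    set M : AddSubgroup (Matrix (Fin p) (Fin p) R) :=
      { carrier := {m : Matrix (Fin p) (Fin p) R |
          (∀ i j : Fin p, j ≤ i → m i j ∈ I) ∧ (∀ i j : Fin p, i < j → m i j ∈ I ^ 2)}
        zero_mem' := ⟨fun _ _ _ => by simp only [Matrix.zero_apply]; exact I.zero_mem,
          fun _ _ _ => by simp only [Matrix.zero_apply]; exact (I ^ 2).zero_mem⟩
        add_mem' := fun {a b} ha hb =>
          ⟨fun i j h => by rw [Matrix.add_apply]; exact I.add_mem (ha.1 i j h) (hb.1 i j h),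
           fun i j h => by rw [Matrix.add_apply]; exact (I ^ 2).add_mem (ha.2 i j h) (hb.2 i j h)⟩
        neg_mem' := fun {a} ha =>
          ⟨fun i j h => by rw [Matrix.neg_apply]; exact I.neg_mem (ha.1 i j h),
           fun i j h => by rw [Matrix.neg_apply]; exact (I ^ 2).neg_mem (ha.2 i j h)⟩ } with hM
    have gen_mem : ∀ (k : ℕ → Fin p) (s : ℕ → R),
        (∀ t < p, s t ∈ I ∨ (k (t+1) < k t ∧ s t = 1)) →
        (∏ t ∈ Finset.range p, s t) • Matrix.single (k 0) (k p) (1:R) ∈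
          AddSubgroup.closure Gen := by
      intro k s hs
      apply AddSubgroup.subset_closure
      refine ⟨(List.range p).map (fun t => s t • Matrix.single (k t) (k (t+1)) 1),
        by simp, ?_, (GL_chain_prod k s p hp).symm⟩
      intro x hx
      simp only [List.mem_map, List.mem_range] at hx
      obtain ⟨t, ht, rfl⟩ := hx
      intro i' j' hij'
      rw [Matrix.smul_single, smul_eq_mul, mul_one]
      rcases hs t ht with hsI | ⟨hkt, _⟩
      · by_cases h : k t = i' ∧ k (t+1) = j'
        · obtain ⟨rfl, rfl⟩ := h
          rw [Matrix.single_apply_same]; exact hsI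
        · rw [Matrix.single_apply_of_ne _ _ _ _ _ h]; exact I.zero_mem
      · have hne : ¬(k t = i' ∧ k (t+1) = j') := by
          rintro ⟨rfl, rfl⟩; exact absurd hij' (not_le.2 hkt)
        rw [Matrix.single_apply_of_ne _ _ _ _ _ hne]; exact I.zero_mem
    -- single matrices on or below the diagonal with entry in I
    have case1 : ∀ (i j : Fin p) (c : R), c ∈ I → j ≤ i →
        Matrix.single i j c ∈ AddSubgroup.closure Gen := by
      intro i j c hc hji
      have hi := i.isLt
      have hj := j.isLt
      have hji' : j.val ≤ i.val := hji
      set k : ℕ → Fin p := fun t =>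
        ⟨if t ≤ i.val then i.val - t else (p - 1 - (i.val - j.val)) - (t - i.val - 1),
          by split <;> omega⟩ with hk
      set s : ℕ → R := fun t => if t = i.val then c else 1 with hs
      have hcond : ∀ t < p, s t ∈ I ∨ (k (t+1) < k t ∧ s t = 1) := by
        intro t ht
        by_cases hti : t = i.val
        · left; simp only [hs, if_pos hti]; exact hc
        · right
          refine ⟨?_, by simp only [hs, if_neg hti]⟩
        -- descent
          rw [hk, Fin.mk_lt_mk]
          split_ifs <;> omega
      have h0 : k 0 = i := by
        apply Fin.ext
        simp only [hk]
        rw [if_pos (Nat.zero_le _)]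
        omega
      have hkp : k p = j := by
        apply Fin.ext
        simp only [hk]
        rw [if_neg (by omega)]
        omega
      have hprod : (∏ t ∈ Finset.range p, s t) = c := by
        rw [hs, Finset.prod_ite_eq' (Finset.range p) i.val (fun _ => c),
          if_pos (Finset.mem_range.2 hi)]
      have hmem := gen_mem k s hcond
      rw [h0, hkp, hprod, Matrix.smul_single, smul_eq_mul, mul_one] at hmem
      exact hmem
    -- single matrices above the diagonal with entry in I^2
    have case2 : ∀ (i j : Fin p) (c : R), c ∈ I ^ 2 → i < j →
        Matrix.single i j c ∈ AddSubgroup.closure Gen := by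
      intro i j c hc hij
      have hi := i.isLt
      have hj := j.isLt
      have hij' : i.val < j.val := hij
      rw [pow_two] at hc
      refine Submodule.mul_induction_on hc (fun x hx y hy => ?_) (fun x y hx' hy' => ?_)
      ·
        set k : ℕ → Fin p := fun t =>
          ⟨if t ≤ i.val then i.val - t
            else if t ≤ p - 1 then p - 1 - (t - i.val - 1) else j.val,
            by split_ifs <;> omega⟩ with hk
        set s : ℕ → R := fun t =>
          (if t = i.val then x else 1) * (if t = p - 1 then y else 1) with hs
        have hip : i.val < p - 1 := by omega
        have hcond : ∀ t < p, s t ∈ I ∨ (k (t+1) < k t ∧ s t = 1) := by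
          intro t ht
          by_cases hti : t = i.val
          · left
            simp only [hs, if_pos hti, if_neg (by omega : ¬ t = p - 1), mul_one]
            exact hx
          · by_cases htp : t = p - 1
            · left
              simp only [hs, if_neg hti, if_pos htp, one_mul]
              exact hy
            · right
              refine ⟨?_, by simp only [hs, if_neg hti, if_neg htp, one_mul]⟩
              rw [hk, Fin.mk_lt_mk]
              split_ifs <;> omega
        have h0 : k 0 = i := by
          apply Fin.ext
          simp only [hk]
          rw [if_pos (Nat.zero_le _)]
          omega
        have hkp : k p = j := by
          apply Fin.ext
          simp only [hk]
          rw [if_neg (by omega), if_neg (by omega)]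
        have hprod : (∏ t ∈ Finset.range p, s t) = x * y := by
          rw [hs, Finset.prod_mul_distrib,
            Finset.prod_ite_eq' (Finset.range p) i.val (fun _ => x),
            Finset.prod_ite_eq' (Finset.range p) (p - 1) (fun _ => y),
            if_pos (Finset.mem_range.2 hi), if_pos (Finset.mem_range.2 (by omega))]
        have hmem := gen_mem k s hcond
        rw [h0, hkp, hprod, Matrix.smul_single, smul_eq_mul, mul_one] at hmem
        exact hmem
      · rw [Matrix.single_add]
        exact AddSubgroup.add_mem _ hx' hy'
    -- now the set equality
    apply Set.eq_of_subset_of_subset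
    · -- closure ≤ M
      intro m hm
      refine (AddSubgroup.closure_le M).2 ?_ hm
      rintro g ⟨l, hlen, hlJ, rfl⟩
      constructor
      · intro i j hji
        have hji' : j.val ≤ i.val := hji
        have hi := i.isLt
        have hj := j.isLt
        have h := GL_prod_entry_mem I l hlJ i j
        rw [hlen] at h
        have he : (p + (p - 1) + j.val - i.val) / p = 1 :=
          Nat.div_eq_of_lt_le (by omega) (by omega)
        rwa [he, pow_one] at h
      · intro i j hij
        have hij' : i.val < j.val := hij
        have hi := i.isLt
        have hj := j.isLt
        have h := GL_prod_entry_mem I l hlJ i j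
        rw [hlen] at h
        have he : (p + (p - 1) + j.val - i.val) / p = 2 :=
          Nat.div_eq_of_lt_le (by omega) (by omega)
        rwa [he] at h
    · -- reverse inclusion
      rintro m ⟨h1, h2⟩
      rw [Matrix.matrix_eq_sum_single m]
      apply AddSubgroup.sum_mem
      intro i _
      apply AddSubgroup.sum_mem
      intro j _
      rcases le_or_gt j i with h | h
      · exact case1 i j (m i j) (h1 i j h) h
      · exact case2 i j (m i j) (h2 i j h) h
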